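/- arXiv:1006.5098 — 3 statements merged into one kernel-verified Lean document; each statement's English description precedes it below -/
import Mathlib

section
/- Let Q be a complete idempotent dioid, Σ and Σ# finite sets, and let A ∈ Q^{Σ#×Σ}, M ∈ Q^{Σ×Σ}, M# ∈ Q^{Σ#×Σ#} with all entries of A equal to ⊥ or e, such that (M, M#, A) is a correct linear abstraction (A M ≤ M# A entrywise). Let I, F ⊆ Σ and I#, F# ⊆ Σ# satisfy: for every i ∈ I there exists s# ∈ I# with A_{s#,i} = e, and for every f ∈ F and every a ∈ Σ# with A_{a,f} = e one has a ∈ F#. Then the global costs satisfy gc(Σ, M, I, F) ≤ gc(Σ#, M#, I#, F#). -/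
open Matrix

section Aux

variable {Q : Type*} [CommSemiring Q] [CompleteLattice Q]

private lemma dioid_le_add_right (hidem : ∀ a : Q, a + a = a)
    (hle : ∀ a b : Q, a ≤ b ↔ a + b = b) (a b : Q) : a ≤ a + b :=
  (hle _ _).mpr (by rw [← add_assoc, hidem])

private lemma dioid_zero_le (hle : ∀ a b : Q, a ≤ b ↔ a + b = b) (a : Q) : (0 : Q) ≤ a :=
  (hle _ _).mpr (zero_add a)

private lemma dioid_add_le_add (hle : ∀ a b : Q, a ≤ b ↔ a + b = b)
    {a b c d : Q} (h1 : a ≤ c) (h2 : b ≤ d) : a + b ≤ c + d := by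
  refine (hle _ _).mpr ?_
  have e1 := (hle a c).mp h1
  have e2 := (hle b d).mp h2
  calc a + b + (c + d) = (a + c) + (b + d) := by ring
    _ = c + d := by rw [e1, e2]

private lemma dioid_sum_le_sum (hle : ∀ a b : Q, a ≤ b ↔ a + b = b)
    {ι : Type*} (s : Finset ι) (f g : ι → Q) (h : ∀ x ∈ s, f x ≤ g x) :
    ∑ x ∈ s, f x ≤ ∑ x ∈ s, g x := by
  induction s using Finset.cons_induction with
  | empty => simp
  | cons y s hy ih =>
    rw [Finset.sum_cons, Finset.sum_cons]
    exact dioid_add_le_add hle (h _ (Finset.mem_cons_self _ _))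
      (ih fun x hxs => h x (Finset.mem_cons_of_mem hxs))

private lemma dioid_sum_le (hle : ∀ a b : Q, a ≤ b ↔ a + b = b)
    {ι : Type*} (s : Finset ι) (f : ι → Q) (c : Q) (h : ∀ x ∈ s, f x ≤ c) :
    ∑ x ∈ s, f x ≤ c := by
  induction s using Finset.cons_induction with
  | empty => simpa using dioid_zero_le hle c
  | cons y s hy ih =>
    rw [Finset.sum_cons]
    refine (hle _ _).mpr ?_
    have e1 := (hle _ _).mp (h _ (Finset.mem_cons_self _ _))
    have e2 := (hle _ _).mp (ih fun x hxs => h x (Finset.mem_cons_of_mem hxs))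
    rw [add_assoc, e2, e1]

private lemma dioid_single_le_sum (hidem : ∀ a : Q, a + a = a)
    (hle : ∀ a b : Q, a ≤ b ↔ a + b = b)
    {ι : Type*} [DecidableEq ι] (s : Finset ι) (f : ι → Q) (x : ι) (hx : x ∈ s) :
    f x ≤ ∑ y ∈ s, f y := by
  rw [← Finset.add_sum_erase s f hx]
  exact dioid_le_add_right hidem hle _ _

private lemma dioid_mul_le_left (hle : ∀ a b : Q, a ≤ b ↔ a + b = b)
    {a b : Q} (c : Q) (h : a ≤ b) : c * a ≤ c * b :=
  (hle _ _).mpr (by rw [← mul_add, (hle a b).mp h])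

private lemma dioid_mul_le_right (hle : ∀ a b : Q, a ≤ b ↔ a + b = b)
    {a b : Q} (c : Q) (h : a ≤ b) : a * c ≤ b * c :=
  (hle _ _).mpr (by rw [← add_mul, (hle a b).mp h])

end Aux

/-- Let `Q` be a complete idempotent dioid, `(M, M#, A)` a correct linear
abstraction with `A` a `⊥`/`e` matrix. If every initial state `i ∈ I` has an abstract state
`s# ∈ I#` with `A s# i = e`, and every abstract state related to a final state of `F` lies
in `F#`, then `gc(Σ, M, I, F) ≤ gc(Σ#, M#, I#, F#)`. -/
theorem stmt_9 {Q : Type*} [CommSemiring Q] [CompleteLattice Q]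
    (hidem : ∀ a : Q, a + a = a)
    (hle : ∀ a b : Q, a ≤ b ↔ a + b = b)
    (hsup : ∀ a b : Q, a ⊔ b = a + b)
    (hbot : (⊥ : Q) = 0)
    (hdistrib : ∀ (a : Q) (X : Set Q), a * sSup X = ⨆ x ∈ X, a * x)
    {S S' : Type*} [Fintype S] [DecidableEq S] [Fintype S'] [DecidableEq S']
    (A : Matrix S' S Q) (M : Matrix S S Q) (M' : Matrix S' S' Q)
    (hA : ∀ (a : S') (σ : S), A a σ = ⊥ ∨ A a σ = 1)
    (hcorrect : ∀ (a : S') (σ : S), (A * M) a σ ≤ (M' * A) a σ)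
    (I F : Set S) (I' F' : Set S')
    (hI : ∀ i ∈ I, ∃ a ∈ I', A a i = 1)
    (hF : ∀ f ∈ F, ∀ a : S', A a f = 1 → a ∈ F') :
    (⨆ i ∈ I, ⨆ f ∈ F, ⨆ (k : ℕ) (_ : 1 ≤ k), (M ^ k) i f) ≤
      ⨆ i ∈ I', ⨆ f ∈ F', ⨆ (k : ℕ) (_ : 1 ≤ k), (M' ^ k) i f := by
  -- A * M^k ≤ M'^k * A entrywise, for k ≥ 1
  have hstep : ∀ k : ℕ, 1 ≤ k → ∀ (a : S') (σ : S),
      (A * M ^ k) a σ ≤ (M' ^ k * A) a σ := by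
    intro k hk
    induction k, hk using Nat.le_induction with
    | base => simpa using hcorrect
    | succ k hk ih =>
      intro a σ
      calc (A * M ^ (k + 1)) a σ = ((A * M ^ k) * M) a σ := by
            rw [pow_succ, ← Matrix.mul_assoc]
        _ ≤ ((M' ^ k * A) * M) a σ := by
            rw [Matrix.mul_apply, Matrix.mul_apply]
            exact dioid_sum_le_sum hle Finset.univ (fun x => (A * M ^ k) a x * M x σ)
              (fun x => (M' ^ k * A) a x * M x σ)
              (fun x _ => dioid_mul_le_right hle _ (ih a x))
        _ = (M' ^ k * (A * M)) a σ := by rw [Matrix.mul_assoc]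
        _ ≤ (M' ^ k * (M' * A)) a σ := by
            rw [Matrix.mul_apply, Matrix.mul_apply]
            exact dioid_sum_le_sum hle Finset.univ (fun x => (M' ^ k) a x * (A * M) x σ)
              (fun x => (M' ^ k) a x * (M' * A) x σ)
              (fun x _ => dioid_mul_le_left hle _ (hcorrect x σ))
        _ = (M' ^ (k + 1) * A) a σ := by rw [pow_succ, Matrix.mul_assoc]
  refine iSup₂_le fun i hi => iSup₂_le fun f hf => iSup₂_le fun k hk => ?_
  obtain ⟨a, haI, hai⟩ := hI i hi
  have h1 : (M ^ k) i f ≤ (A * M ^ k) a f := by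
    rw [Matrix.mul_apply]
    calc (M ^ k) i f = A a i * (M ^ k) i f := by rw [hai, one_mul]
      _ ≤ ∑ x : S, A a x * (M ^ k) x f :=
        dioid_single_le_sum hidem hle Finset.univ
          (fun x => A a x * (M ^ k) x f) i (Finset.mem_univ i)
  have h2 : (A * M ^ k) a f ≤ (M' ^ k * A) a f := hstep k hk a f
  have h3 : (M' ^ k * A) a f ≤
      ⨆ i ∈ I', ⨆ f ∈ F', ⨆ (k : ℕ) (_ : 1 ≤ k), (M' ^ k) i f := by
    rw [Matrix.mul_apply]
    refine dioid_sum_le hle Finset.univ (fun b => (M' ^ k) a b * A b f) _ fun b _ => ?_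
    rcases hA b f with h0 | h1'
    · show (M' ^ k) a b * A b f ≤ _
      rw [h0, hbot, mul_zero]
      exact dioid_zero_le hle _
    · show (M' ^ k) a b * A b f ≤ _
      rw [h1', mul_one]
      have hbF : b ∈ F' := hF f hf b h1'
      exact le_iSup₂_of_le a haI (le_iSup₂_of_le b hbF (le_iSup₂_of_le k hk le_rfl))
  exact le_trans h1 (le_trans h2 h3)
end

section
/- Let Q be a selective cost dioid, Σ and Σ# finite sets, and let A ∈ Q^{Σ#×Σ}, M ∈ Q^{Σ×Σ}, M# ∈ Q^{Σ#×Σ#} with all entries of A equal to ⊥ or e, every column of A containing at least one entry equal to e, such that (M, M#, A) is a correct linear abstraction (A M ≤ M# A entrywise). Then the long-run costs satisfy ρ(M) ≤ ρ(M#), where ρ(N) = ⨆_{k≥1} √[k]{ tr(N^k) }. -/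
open Matrix

section Aux

variable {Q : Type*} [CommSemiring Q] [CompleteLattice Q]

lemma aux_le_add (hle : ∀ a b : Q, a ≤ b ↔ a + b = b) (hidem : ∀ a : Q, a + a = a)
    (a b : Q) : a ≤ a + b := by
  rw [hle]
  calc a + (a + b) = (a + a) + b := by ring
    _ = a + b := by rw [hidem]

lemma aux_add_mono (hle : ∀ a b : Q, a ≤ b ↔ a + b = b)
    {a b c d : Q} (h1 : a ≤ b) (h2 : c ≤ d) : a + c ≤ b + d := by
  rw [hle] at h1 h2 ⊢
  calc a + c + (b + d) = (a + b) + (c + d) := by ring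
    _ = b + d := by rw [h1, h2]

lemma aux_mul_mono (hle : ∀ a b : Q, a ≤ b ↔ a + b = b) (hidem : ∀ a : Q, a + a = a)
    {a b c d : Q} (h1 : a ≤ b) (h2 : c ≤ d) : a * c ≤ b * d := by
  rw [hle] at h1 h2
  have key : b * d = a * c + (a * d + (b * c + b * d)) := by
    conv_lhs => rw [← h1, ← h2]
    ring
  rw [key]
  exact aux_le_add hle hidem _ _

lemma aux_pow_mono (hle : ∀ a b : Q, a ≤ b ↔ a + b = b) (hidem : ∀ a : Q, a + a = a)
    {a b : Q} (h : a ≤ b) : ∀ n : ℕ, a ^ n ≤ b ^ n := by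
  intro n
  induction n with
  | zero => simp
  | succ n ih =>
    rw [pow_succ, pow_succ]
    exact aux_mul_mono hle hidem ih h

lemma aux_term_le_sum (hle : ∀ a b : Q, a ≤ b ↔ a + b = b) (hidem : ∀ a : Q, a + a = a)
    {α : Type*} [DecidableEq α] (s : Finset α) (f : α → Q) (x : α) (hx : x ∈ s) :
    f x ≤ ∑ y ∈ s, f y := by
  rw [← Finset.add_sum_erase s f hx]
  exact aux_le_add hle hidem _ _

lemma aux_sel_sum (hsel : ∀ a b : Q, a + b = a ∨ a + b = b)
    {α : Type*} (s : Finset α) (f : α → Q) (hs : s.Nonempty) :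
    ∃ x ∈ s, ∑ y ∈ s, f y = f x := by
  classical
  induction hs using Finset.Nonempty.cons_induction with
  | singleton a => exact ⟨a, by simp, by simp⟩
  | cons a s ha hs ih =>
    obtain ⟨x, hx, hsum⟩ := ih
    rw [Finset.sum_cons, hsum]
    rcases hsel (f a) (f x) with h | h
    · exact ⟨a, by simp, h⟩
    · exact ⟨x, by simp [hx], h⟩

lemma aux_sum_le_sum (hle : ∀ a b : Q, a ≤ b ↔ a + b = b)
    {α : Type*} (s : Finset α) (f g : α → Q) (h : ∀ x ∈ s, f x ≤ g x) :
    ∑ y ∈ s, f y ≤ ∑ y ∈ s, g y := by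
  classical
  revert h
  induction s using Finset.cons_induction with
  | empty => intro _; simp
  | cons a s ha ih =>
    intro h
    rw [Finset.sum_cons, Finset.sum_cons]
    exact aux_add_mono hle (h a (Finset.mem_cons_self a s))
      (ih fun x hx => h x (Finset.mem_cons_of_mem hx))

end Aux

/-- Let `Q` be a selective cost dioid and `(M, M#, A)` a correct linear
abstraction with `A` a `⊥`/`e` matrix each column of which contains at least one `e`.
Then the long-run costs satisfy `ρ(M) ≤ ρ(M#)` where `ρ(N) = ⨆ k ≥ 1, √[k]{tr (N ^ k)}`. -/
theorem stmt_10 {Q : Type*} [CommSemiring Q] [CompleteLattice Q]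
    (hidem : ∀ a : Q, a + a = a)
    (hle : ∀ a b : Q, a ≤ b ↔ a + b = b)
    (hsup : ∀ a b : Q, a ⊔ b = a + b)
    (hbot : (⊥ : Q) = 0)
    (hdistrib : ∀ (a : Q) (X : Set Q), a * sSup X = ⨆ x ∈ X, a * x)
    (root : Q → ℕ → Q)
    (hroot : ∀ (q : Q) (n : ℕ), 1 ≤ n → root q n ^ n = q)
    (hroot_unique : ∀ (q x : Q) (n : ℕ), 1 ≤ n → x ^ n = q → x = root q n)
    (hlsc : ∀ (n : ℕ), 1 ≤ n → ∀ X : Set Q, sSup X ^ n = ⨆ x ∈ X, x ^ n)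
    (hsel : ∀ a b : Q, a + b = a ∨ a + b = b)
    {S S' : Type*} [Fintype S] [DecidableEq S] [Fintype S'] [DecidableEq S']
    (A : Matrix S' S Q) (M : Matrix S S Q) (M' : Matrix S' S' Q)
    (hA : ∀ (a : S') (σ : S), A a σ = ⊥ ∨ A a σ = 1)
    (hAcol : ∀ σ : S, ∃ a : S', A a σ = 1)
    (hcorrect : ∀ (a : S') (σ : S), (A * M) a σ ≤ (M' * A) a σ) :
    (⨆ (k : ℕ) (_ : 1 ≤ k), root (⨆ σ : S, (M ^ k) σ σ) k) ≤
      ⨆ (k : ℕ) (_ : 1 ≤ k), root (⨆ σ : S', (M' ^ k) σ σ) k := by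
  classical
  -- root of bottom is bottom
  have hroot_bot : ∀ n : ℕ, 1 ≤ n → root (⊥ : Q) n = ⊥ := by
    intro n hn
    refine (hroot_unique ⊥ ⊥ n hn ?_).symm
    rw [hbot]
    exact zero_pow (by omega)
  -- root is monotone
  have hroot_mono : ∀ (p q : Q) (n : ℕ), 1 ≤ n → p ≤ q → root p n ≤ root q n := by
    intro p q n hn hpq
    rcases hsel (root p n) (root q n) with h | h
    · have hq_le : root q n ≤ root p n := by
        rw [hle, add_comm]; exact h
      have hqp : q ≤ p := by
        calc q = (root q n) ^ n := (hroot q n hn).symm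
          _ ≤ (root p n) ^ n := aux_pow_mono hle hidem hq_le n
          _ = p := hroot p n hn
      rw [le_antisymm hpq hqp]
    · rw [hle]; exact h
  -- correctness for powers
  have hpowc : ∀ (k : ℕ) (a : S') (σ : S), (A * M ^ k) a σ ≤ (M' ^ k * A) a σ := by
    intro k
    induction k with
    | zero => intro a σ; simp
    | succ k ih =>
      intro a σ
      have e1 : A * M ^ (k + 1) = (A * M ^ k) * M := by
        rw [pow_succ, ← Matrix.mul_assoc]
      have e2 : M' ^ (k + 1) * A = M' ^ k * (M' * A) := by
        rw [pow_succ, Matrix.mul_assoc]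
      rw [e1, e2]
      calc ((A * M ^ k) * M) a σ = ∑ τ, (A * M ^ k) a τ * M τ σ := Matrix.mul_apply
        _ ≤ ∑ τ, (M' ^ k * A) a τ * M τ σ :=
            aux_sum_le_sum hle _ _ _ (fun τ _ => aux_mul_mono hle hidem (ih a τ) le_rfl)
        _ = ((M' ^ k * A) * M) a σ := (Matrix.mul_apply).symm
        _ = (M' ^ k * (A * M)) a σ := by rw [Matrix.mul_assoc]
        _ = ∑ b, (M' ^ k) a b * (A * M) b σ := Matrix.mul_apply
        _ ≤ ∑ b, (M' ^ k) a b * (M' * A) b σ :=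
            aux_sum_le_sum hle _ _ _ (fun b _ => aux_mul_mono hle hidem le_rfl (hcorrect b σ))
        _ = (M' ^ k * (M' * A)) a σ := (Matrix.mul_apply).symm
  -- main
  refine iSup_le fun k => iSup_le fun hk => ?_
  rcases isEmpty_or_nonempty S with hS | hS
  · rw [iSup_of_empty, hroot_bot k hk]
    exact bot_le
  · -- the trace is attained at some σ₀
    obtain ⟨σ₀, -, hσ₀⟩ := aux_sel_sum hsel Finset.univ (fun σ => (M ^ k) σ σ)
      Finset.univ_nonempty
    have hsup_eq : (⨆ σ : S, (M ^ k) σ σ) = (M ^ k) σ₀ σ₀ :=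
      le_antisymm
        (iSup_le fun σ => le_of_le_of_eq
          (aux_term_le_sum hle hidem Finset.univ (fun τ => (M ^ k) τ τ) σ
            (Finset.mem_univ σ)) hσ₀)
        (le_iSup (fun σ : S => (M ^ k) σ σ) σ₀)
    rw [hsup_eq]
    set q : Q := (M ^ k) σ₀ σ₀ with hqdef
    by_cases hq : q = ⊥
    · rw [hq, hroot_bot k hk]; exact bot_le
    -- one step of the chain construction
    have hstep : ∀ a : S', A a σ₀ = 1 → ∃ b : S', A b σ₀ = 1 ∧ q ≤ (M' ^ k) a b := by
      intro a ha
      have h1 : q ≤ (A * M ^ k) a σ₀ := by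
        rw [Matrix.mul_apply]
        have := aux_term_le_sum hle hidem Finset.univ
          (fun τ => A a τ * (M ^ k) τ σ₀) σ₀ (Finset.mem_univ _)
        simpa [ha] using this
      have h2 : q ≤ (M' ^ k * A) a σ₀ := h1.trans (hpowc k a σ₀)
      rw [Matrix.mul_apply] at h2
      obtain ⟨b, -, hb⟩ := aux_sel_sum hsel Finset.univ
        (fun b => (M' ^ k) a b * A b σ₀) ⟨a, Finset.mem_univ a⟩
      rw [hb] at h2
      rcases hA b σ₀ with h | h
      · exfalso
        apply hq
        rw [h, hbot, mul_zero, ← hbot] at h2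
        exact le_bot_iff.mp h2
      · rw [h, mul_one] at h2
        exact ⟨b, h, h2⟩
    obtain ⟨a₀, ha₀⟩ := hAcol σ₀
    -- build the chain
    let next : {b : S' // A b σ₀ = 1} → {b : S' // A b σ₀ = 1} :=
      fun a => ⟨(hstep a.1 a.2).choose, (hstep a.1 a.2).choose_spec.1⟩
    let c : ℕ → {b : S' // A b σ₀ = 1} := fun n => next^[n] ⟨a₀, ha₀⟩
    have hc : ∀ i : ℕ, q ≤ (M' ^ k) (c i).1 (c (i + 1)).1 := by
      intro i
      have hstepc : c (i + 1) = next (c i) := Function.iterate_succ_apply' next i _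
      rw [hstepc]
      exact (hstep (c i).1 (c i).2).choose_spec.2
    -- pigeonhole: the chain repeats
    obtain ⟨i, j, hlt, hceq⟩ : ∃ i j : ℕ, i < j ∧ c i = c j := by
      obtain ⟨i, j, hij, hcij⟩ := Finite.exists_ne_map_eq_of_infinite c
      rcases lt_or_gt_of_ne hij with h | h
      · exact ⟨i, j, h, hcij⟩
      · exact ⟨j, i, h, hcij.symm⟩
    -- chain powers
    have hchain : ∀ (n i : ℕ), q ^ (n + 1) ≤ (M' ^ (k * (n + 1))) (c i).1 (c (i + (n + 1))).1 := by
      intro n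
      induction n with
      | zero =>
        intro i
        simpa [mul_one] using hc i
      | succ n ih =>
        intro i
        have h1 : q ^ (n + 2) = q ^ (n + 1) * q := by ring
        have h2 : q ^ (n + 1) * q ≤
            (M' ^ (k * (n + 1))) (c i).1 (c (i + (n + 1))).1 *
              (M' ^ k) (c (i + (n + 1))).1 (c (i + (n + 1) + 1)).1 :=
          aux_mul_mono hle hidem (ih i) (hc (i + (n + 1)))
        have h3 : (M' ^ (k * (n + 1))) (c i).1 (c (i + (n + 1))).1 *
              (M' ^ k) (c (i + (n + 1))).1 (c (i + (n + 1) + 1)).1 ≤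
            (M' ^ (k * (n + 1)) * M' ^ k) (c i).1 (c (i + (n + 1) + 1)).1 := by
          rw [Matrix.mul_apply]
          exact aux_term_le_sum hle hidem Finset.univ
            (fun b => (M' ^ (k * (n + 1))) (c i).1 b * (M' ^ k) b (c (i + (n + 1) + 1)).1)
            (c (i + (n + 1))).1 (Finset.mem_univ _)
        have h4 : M' ^ (k * (n + 1)) * M' ^ k = M' ^ (k * (n + 2)) := by
          have he : k * (n + 1) + k = k * (n + 2) := by ring
          rw [← pow_add, he]
        have h5 : i + (n + 1) + 1 = i + (n + 2) := by omega
        rw [h1]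
        calc q ^ (n + 1) * q ≤ _ := h2
          _ ≤ (M' ^ (k * (n + 1)) * M' ^ k) (c i).1 (c (i + (n + 1) + 1)).1 := h3
          _ = (M' ^ (k * (n + 2))) (c i).1 (c (i + (n + 2))).1 := by rw [h4, h5]
    -- take the cycle
    set m : ℕ := j - i with hmdef
    have hm : 1 ≤ m := by omega
    have hij' : i + m = j := by omega
    have hdiag : q ^ m ≤ (M' ^ (k * m)) (c i).1 (c i).1 := by
      have := hchain (m - 1) i
      have hm1 : m - 1 + 1 = m := by omega
      rw [hm1, hij', ← hceq] at this
      exact this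
    have hkm : 1 ≤ k * m := by
      calc 1 = 1 * 1 := (one_mul 1).symm
        _ ≤ k * m := Nat.mul_le_mul hk hm
    have htr : q ^ m ≤ ⨆ σ : S', (M' ^ (k * m)) σ σ :=
      hdiag.trans (le_iSup (fun σ => (M' ^ (k * m)) σ σ) (c i).1)
    have hrq : root q k = root (q ^ m) (k * m) := by
      refine hroot_unique (q ^ m) (root q k) (k * m) hkm ?_
      rw [pow_mul, hroot q k hk]
    calc root q k = root (q ^ m) (k * m) := hrq
      _ ≤ root (⨆ σ : S', (M' ^ (k * m)) σ σ) (k * m) := hroot_mono _ _ _ hkm htr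
      _ ≤ ⨆ (k' : ℕ) (_ : 1 ≤ k'), root (⨆ σ : S', (M' ^ k') σ σ) k' :=
          le_iSup_of_le (k * m) (le_iSup_of_le hkm le_rfl)
end

section
/- Let Q be a selective cost dioid, Σ and Σ# finite sets, and let A ∈ Q^{Σ#×Σ}, M ∈ Q^{Σ×Σ}, M# ∈ Q^{Σ#×Σ#} with all entries of A equal to ⊥ or e, such that (M, M#, A) is a correct linear abstraction (A M ≤ M# A entrywise). Let σ ∈ Σ and k ≥ 1 be such that (M^k)_{σ,σ} ≠ ⊥, and let s ≥ 1 be the number of abstract states a ∈ Σ# with A_{a,σ} = e. Then there exist σ#_j ∈ Σ# with A_{σ#_j,σ} = e and an integer r with 1 ≤ r ≤ s such that √[k]{ (M^k)_{σ,σ} } ≤ √[kr]{ ((M#)^{kr})_{σ#_j,σ#_j} }. -/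
open Matrix

private lemma aux_add_le {Q : Type*} [CommSemiring Q] [CompleteLattice Q]
    (hle : ∀ a b : Q, a ≤ b ↔ a + b = b) {a b c d : Q} (hab : a ≤ b) (hcd : c ≤ d) :
    a + c ≤ b + d := by
  rw [hle] at hab hcd ⊢
  calc (a + c) + (b + d) = (a + b) + (c + d) := by ring
  _ = b + d := by rw [hab, hcd]

private lemma aux_sum_le {Q : Type*} [CommSemiring Q] [CompleteLattice Q]
    (hle : ∀ a b : Q, a ≤ b ↔ a + b = b) {ι : Type*} (t : Finset ι) (f g : ι → Q)
    (h : ∀ i ∈ t, f i ≤ g i) : ∑ i ∈ t, f i ≤ ∑ i ∈ t, g i := by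
  classical
  induction t using Finset.induction with
  | empty => simp
  | insert _ _ hx ih =>
    rw [Finset.sum_insert hx, Finset.sum_insert hx]
    exact aux_add_le hle (h _ (Finset.mem_insert_self _ _))
      (ih fun i hi => h i (Finset.mem_insert_of_mem hi))

private lemma aux_le_sum {Q : Type*} [CommSemiring Q] [CompleteLattice Q]
    (hidem : ∀ a : Q, a + a = a) (hle : ∀ a b : Q, a ≤ b ↔ a + b = b)
    {ι : Type*} (t : Finset ι) (f : ι → Q) (i : ι) (hi : i ∈ t) :
    f i ≤ ∑ x ∈ t, f x := by
  classical
  rw [hle, ← Finset.add_sum_erase t f hi, ← add_assoc, hidem]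

private lemma aux_pick {Q : Type*} [CommSemiring Q] [CompleteLattice Q]
    (hle : ∀ a b : Q, a ≤ b ↔ a + b = b) (hsel : ∀ a b : Q, a + b = a ∨ a + b = b)
    {ι : Type*} (t : Finset ι) (f : ι → Q) (q : Q) (hq : q ≠ 0)
    (h : q ≤ ∑ i ∈ t, f i) : ∃ i ∈ t, q ≤ f i := by
  classical
  induction t using Finset.induction with
  | empty =>
    simp only [Finset.sum_empty] at h
    rw [hle] at h
    exact absurd ((add_zero q).symm.trans h) hq
  | insert _ _ hx ih =>
    rw [Finset.sum_insert hx] at h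
    rcases hsel (f _) (∑ i ∈ _, f i) with hc | hc
    · rw [hc] at h
      exact ⟨_, Finset.mem_insert_self _ _, h⟩
    · rw [hc] at h
      obtain ⟨i, hi, hqi⟩ := ih h
      exact ⟨i, Finset.mem_insert_of_mem hi, hqi⟩

/-- Let `Q` be a selective cost dioid and `(M, M#, A)` a correct linear
abstraction with `A` a `⊥`/`e` matrix. Let `σ` and `k ≥ 1` be such that `(M^k) σ σ ≠ ⊥`,
and let `s ≥ 1` be the number of abstract states `a` with `A a σ = e`. Then there exist
`σ#ⱼ` with `A σ#ⱼ σ = e` and `1 ≤ r ≤ s` with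
`√[k]{(M^k) σ σ} ≤ √[kr]{((M#)^{kr}) σ#ⱼ σ#ⱼ}`. -/
theorem stmt_14 {Q : Type*} [CommSemiring Q] [CompleteLattice Q]
    (hidem : ∀ a : Q, a + a = a)
    (hle : ∀ a b : Q, a ≤ b ↔ a + b = b)
    (hsup : ∀ a b : Q, a ⊔ b = a + b)
    (hbot : (⊥ : Q) = 0)
    (hdistrib : ∀ (a : Q) (X : Set Q), a * sSup X = ⨆ x ∈ X, a * x)
    (root : Q → ℕ → Q)
    (hroot : ∀ (q : Q) (n : ℕ), 1 ≤ n → root q n ^ n = q)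
    (hroot_unique : ∀ (q x : Q) (n : ℕ), 1 ≤ n → x ^ n = q → x = root q n)
    (hlsc : ∀ (n : ℕ), 1 ≤ n → ∀ X : Set Q, sSup X ^ n = ⨆ x ∈ X, x ^ n)
    (hsel : ∀ a b : Q, a + b = a ∨ a + b = b)
    {S S' : Type*} [Fintype S] [DecidableEq S] [Fintype S'] [DecidableEq S']
    (A : Matrix S' S Q) (M : Matrix S S Q) (M' : Matrix S' S' Q)
    (hA : ∀ (a : S') (σ : S), A a σ = ⊥ ∨ A a σ = 1)
    (hcorrect : ∀ (a : S') (σ : S), (A * M) a σ ≤ (M' * A) a σ)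
    (σ : S) (k : ℕ) (hk : 1 ≤ k) (hM : (M ^ k) σ σ ≠ ⊥)
    (s : ℕ) (hs : s = Nat.card { a : S' // A a σ = 1 }) (hs1 : 1 ≤ s) :
    ∃ j : S', A j σ = 1 ∧ ∃ r : ℕ, 1 ≤ r ∧ r ≤ s ∧
      root ((M ^ k) σ σ) k ≤ root ((M' ^ (k * r)) j j) (k * r) := by
  classical
  have hmul_le : ∀ a b c : Q, a ≤ b → c * a ≤ c * b := by
    intro a b c h
    rw [hle] at h ⊢
    rw [← mul_add, h]
  have hmul_le' : ∀ a b c : Q, a ≤ b → a * c ≤ b * c := by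
    intro a b c h
    rw [mul_comm a c, mul_comm b c]; exact hmul_le a b c h
  -- correctness iterated
  have hcorr_pow : ∀ n : ℕ, ∀ (a : S') (t : S), (A * M ^ n) a t ≤ (M' ^ n * A) a t := by
    intro n
    induction n with
    | zero => intro a t; simp
    | succ n ih =>
      intro a t
      have h1 : (A * M ^ (n + 1)) a t = ((A * M ^ n) * M) a t := by
        rw [pow_succ, Matrix.mul_assoc]
      have h2 : ((A * M ^ n) * M) a t ≤ ((M' ^ n * A) * M) a t := by
        rw [Matrix.mul_apply, Matrix.mul_apply]
        exact aux_sum_le hle _ _ _ fun i _ =>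
          hmul_le' ((A * M ^ n) a i) ((M' ^ n * A) a i) (M i t) (ih a i)
      have h3 : ((M' ^ n * A) * M) a t = (M' ^ n * (A * M)) a t := by
        rw [Matrix.mul_assoc]
      have h4 : (M' ^ n * (A * M)) a t ≤ (M' ^ n * (M' * A)) a t := by
        rw [Matrix.mul_apply, Matrix.mul_apply]
        exact aux_sum_le hle _ _ _ fun i _ =>
          hmul_le ((A * M) i t) ((M' * A) i t) ((M' ^ n) a i) (hcorrect i t)
      have h5 : (M' ^ n * (M' * A)) a t = (M' ^ (n + 1) * A) a t := by
        rw [pow_succ, Matrix.mul_assoc]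
      rw [h1]
      exact le_trans h2 (le_trans (le_of_eq h3) (le_trans h4 (le_of_eq h5)))
  set q : Q := (M ^ k) σ σ with hq
  have hq0 : q ≠ 0 := by rw [← hbot]; exact hM
  -- the step function
  have hstep : ∀ a : S', A a σ = 1 → ∃ b : S', A b σ = 1 ∧ q ≤ (M' ^ k) a b := by
    intro a ha
    have h1 : q ≤ (A * M ^ k) a σ := by
      have h := aux_le_sum hidem hle Finset.univ (fun x => A a x * (M ^ k) x σ) σ
        (Finset.mem_univ σ)
      rw [Matrix.mul_apply]
      simpa [ha] using h
    have h2 : q ≤ (M' ^ k * A) a σ := le_trans h1 (hcorr_pow k a σ)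
    rw [Matrix.mul_apply] at h2
    obtain ⟨b, _, hb⟩ := aux_pick hle hsel Finset.univ _ q hq0 h2
    rcases hA b σ with h | h
    · rw [h, hbot, mul_zero, hle, add_zero] at hb
      exact absurd hb hq0
    · rw [h, mul_one] at hb
      exact ⟨b, h, hb⟩
  set T := { a : S' // A a σ = 1 } with hT
  let f : T → T := fun a => ⟨Classical.choose (hstep a.1 a.2),
    (Classical.choose_spec (hstep a.1 a.2)).1⟩
  have hf : ∀ a : T, q ≤ (M' ^ k) a.1 (f a).1 := fun a =>
    (Classical.choose_spec (hstep a.1 a.2)).2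
  -- chain
  have hchain : ∀ (m : ℕ) (a : T), q ^ m ≤ (M' ^ (k * m)) a.1 (f^[m] a).1 := by
    intro m
    induction m with
    | zero => intro a; simp [Matrix.one_apply_eq]
    | succ m ih =>
      intro a
      have hiter : f^[m + 1] a = f (f^[m] a) := Function.iterate_succ_apply' f m a
      have h1 : q ^ (m + 1) ≤
          (M' ^ (k * m)) a.1 (f^[m] a).1 * (M' ^ k) (f^[m] a).1 (f^[m+1] a).1 := by
        rw [pow_succ]
        refine le_trans (hmul_le _ _ _ ?_) (hmul_le' _ _ _ (ih a))
        rw [hiter]; exact hf (f^[m] a)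
      have h2 : (M' ^ (k * m)) a.1 (f^[m] a).1 * (M' ^ k) (f^[m] a).1 (f^[m+1] a).1
          ≤ (M' ^ (k * (m + 1))) a.1 (f^[m+1] a).1 := by
        have he : (M' ^ (k * (m + 1))) = M' ^ (k * m) * M' ^ k := by
          rw [← pow_add]; ring_nf
        rw [he, Matrix.mul_apply]
        exact aux_le_sum hidem hle Finset.univ
          (fun b => (M' ^ (k * m)) a.1 b * (M' ^ k) b (f^[m+1] a).1)
          (f^[m] a).1 (Finset.mem_univ _)
      exact le_trans h1 h2
  -- pigeonhole
  have hfinT' : Fintype T := Fintype.ofFinite T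
  have hcard : Fintype.card T = s := by rw [hs, Nat.card_eq_fintype_card]
  have hTne : Nonempty T := by
    rw [← Fintype.card_pos_iff, hcard]; exact hs1
  obtain ⟨a₀⟩ := hTne
  have hlt : Fintype.card T < Fintype.card (Fin (s + 1)) := by
    rw [hcard, Fintype.card_fin]; omega
  obtain ⟨i, j, hij, heq⟩ := Fintype.exists_ne_map_eq_of_card_lt
    (fun i : Fin (s + 1) => f^[i.1] a₀) hlt
  wlog hij' : i.1 < j.1 generalizing i j
  · have hne : i.1 ≠ j.1 := fun h => hij (Fin.ext h)
    exact this j i (Ne.symm hij) heq.symm (by omega)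
  set r := j.1 - i.1 with hr
  set a : T := f^[i.1] a₀ with ha
  have hcycle : f^[r] a = a := by
    rw [ha, ← Function.iterate_add_apply]
    have h : r + i.1 = j.1 := by omega
    rw [h, ← heq]
  have hr1 : 1 ≤ r := by omega
  have hrs : r ≤ s := by have := j.2; omega
  have hfinal : q ^ r ≤ (M' ^ (k * r)) a.1 a.1 := by
    have h := hchain r a
    rwa [hcycle] at h
  -- power order reflection
  have hpow_le : ∀ (u v : Q) (n : ℕ), 1 ≤ n → u ^ n ≤ v ^ n → u ≤ v := by
    intro u v n hn huv
    have h1 : sSup {u, v} ^ n = ⨆ x ∈ ({u, v} : Set Q), x ^ n := hlsc n hn _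
    rw [sSup_pair, iSup_pair, hsup, hsup] at h1
    rw [hle] at huv
    rw [huv] at h1
    have h2 : u + v = root (v ^ n) n := hroot_unique _ _ n hn h1
    have h3 : v = root (v ^ n) n := hroot_unique _ _ n hn rfl
    rw [hle, h2, ← h3]
  refine ⟨a.1, a.2, r, hr1, hrs, ?_⟩
  apply hpow_le _ _ (k * r) (Nat.mul_pos hk hr1)
  have hx : root q k ^ (k * r) = q ^ r := by
    rw [pow_mul, hroot q k hk]
  have hy : root ((M' ^ (k * r)) a.1 a.1) (k * r) ^ (k * r) = (M' ^ (k * r)) a.1 a.1 :=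
    hroot _ _ (Nat.mul_pos hk hr1)
  rw [hx, hy]
  exact hfinal
end
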